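/- If f is a geodesic Leech labeling of the cycle graph C_10 on 10 vertices, then every geodesic path of length 5 in C_10 has weight at least 35 under f. -/

import Mathlib

open SimpleGraph Finset

/-- A walk in `G` is a *geodesic walk* if it is a nontrivial path whose length equals
the distance in `G` between its endpoints. -/
def SimpleGraph.IsGeodesicWalk {V : Type*} (G : SimpleGraph V) {u v : V}
    (p : G.Walk u v) : Prop :=
  p.IsPath ∧ p.length = G.dist u v ∧ 0 < p.length

/-- The geodesic paths of `G`, where a path and its reverse are identified by
recording the (finite) set of edges of the path.  (A nontrivial path is determined,
up to reversal, by its edge set.) -/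
def SimpleGraph.geodesicPathSets {V : Type*} [DecidableEq V] (G : SimpleGraph V) :
    Set (Finset (Sym2 V)) :=
  {S | ∃ (u v : V) (p : G.Walk u v), G.IsGeodesicWalk p ∧ p.edges.toFinset = S}

/-- The geodesic path number `t_gp(G)`: the number of geodesic paths of `G`. -/
noncomputable def SimpleGraph.tgp {V : Type*} [DecidableEq V] (G : SimpleGraph V) : ℕ :=
  G.geodesicPathSets.ncard

/-- `f` is a geodesic Leech labeling of `G`: an edge labeling by positive integers such
that the weights of the geodesic paths of `G` are exactly `1, 2, …, t_gp(G)`,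
each occurring exactly once. -/
def SimpleGraph.IsGeodesicLeechLabeling {V : Type*} [DecidableEq V] (G : SimpleGraph V)
    (f : Sym2 V → ℕ) : Prop :=
  (∀ e ∈ G.edgeSet, 1 ≤ f e) ∧
    Set.BijOn (fun S => ∑ e ∈ S, f e) G.geodesicPathSets (Set.Icc 1 G.tgp)


open SimpleGraph Finset
open scoped Fin.NatCast Fin.CommRing

/-- the edge from j to j+1 -/
def E (j : Fin 10) : Sym2 (Fin 10) := s(j, j + 1)

lemma E_inj : Function.Injective E := by
  intro a b h
  rw [E, E, Sym2.eq_iff] at h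
  rcases h with ⟨h1, _⟩ | ⟨h1, h2⟩
  · exact h1
  · rw [← h2, add_assoc] at h1
    norm_num at h1
    exact absurd h1 (by decide)

/-- arc of k consecutive edges starting at vertex i -/
def FArc (i : Fin 10) (k : ℕ) : Finset (Sym2 (Fin 10)) :=
  (Finset.range k).image (fun t : ℕ => E (i + (t : Fin 10)))

lemma mem_FArc {e : Sym2 (Fin 10)} {i : Fin 10} {k : ℕ} :
    e ∈ FArc i k ↔ ∃ t < k, e = E (i + (t : Fin 10)) := by
  simp [FArc, eq_comm]

lemma cast_inj_ten {t t' : ℕ} (ht : t < 10) (ht' : t' < 10) (h : (t : Fin 10) = (t' : Fin 10)) :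
    t = t' := by
  have := congrArg Fin.val h
  simp [Fin.val_natCast] at this
  omega

lemma FArc_cons (i : Fin 10) (k : ℕ) :
    FArc i (k + 1) = insert (E i) (FArc (i + 1) k) := by
  ext e
  simp only [mem_FArc, Finset.mem_insert]
  constructor
  · rintro ⟨t, ht, rfl⟩
    match t with
    | 0 => left; simp
    | t + 1 =>
      right
      exact ⟨t, by omega, by push_cast; ring_nf⟩
  · rintro (rfl | ⟨t, ht, rfl⟩)
    · exact ⟨0, by omega, by simp⟩
    · exact ⟨t + 1, by omega, by push_cast; ring_nf⟩

lemma FArc_snoc (i : Fin 10) (k : ℕ) :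
    FArc i (k + 1) = insert (E (i + (k : Fin 10))) (FArc i k) := by
  rw [FArc, FArc, Finset.range_add_one, Finset.image_insert]

lemma FArc_card {i : Fin 10} {k : ℕ} (hk : k ≤ 10) : (FArc i k).card = k := by
  rw [FArc, Finset.card_image_of_injOn, Finset.card_range]
  intro t ht t' ht' h
  simp only [Finset.coe_range, Set.mem_Iio] at ht ht'
  exact cast_inj_ten (by omega) (by omega) (add_left_cancel (E_inj h))
lemma adj_cases {u w : Fin 10} (h : (SimpleGraph.cycleGraph 10).Adj u w) :
    w = u + 1 ∨ w = u - 1 := by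
  have := (cycleGraph_adj (n := 8)).mp h
  rcases this with h1 | h1
  · right; rw [← h1]; ring
  · left; rw [← h1]; ring

/-- Every path in the 10-cycle is a monotone arc. -/
lemma path_arc {u v : Fin 10} (p : (SimpleGraph.cycleGraph 10).Walk u v) (hp : p.IsPath) :
    (v = u + (p.length : Fin 10) ∧ p.edges.toFinset = FArc u p.length) ∨
    (u = v + (p.length : Fin 10) ∧ p.edges.toFinset = FArc v p.length) := by
  induction p with
  | nil => left; simp [FArc]
  | @cons u w v h q ih =>
    rw [SimpleGraph.Walk.cons_isPath_iff] at hp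
    obtain ⟨hq, hu⟩ := hp
    have hedges : (SimpleGraph.Walk.cons h q).edges.toFinset
        = insert s(u, w) q.edges.toFinset := by
      simp [SimpleGraph.Walk.edges_cons]
    have hlen : (SimpleGraph.Walk.cons h q).length = q.length + 1 := by simp
    obtain ⟨n, hn⟩ : ∃ n, q.length = n := ⟨_, rfl⟩
    rw [hn] at hlen
    rcases ih hq with ⟨hv, hE⟩ | ⟨hv, hE⟩ <;> rw [hn] at hv hE <;>
      rw [hlen, hedges] <;> clear hedges hlen hn ih
    · -- q ascending from w : v = w + n
      rcases adj_cases h with hw | hw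
      · -- w = u + 1 : whole walk ascending
        left
        refine ⟨by push_cast; linear_combination hv + hw, ?_⟩
        have h1 : s(u, w) = E u := by rw [hw]; rfl
        rw [hE, FArc_cons, h1, hw]
      · -- w = u - 1 : turn back
        have hu1 : u = w + 1 := by linear_combination -hw
        match n with
        | 0 =>
          right
          have hvw : v = w := by simpa using hv
          refine ⟨by push_cast; linear_combination -hvw - hw, ?_⟩
          have e0 : FArc w 0 = ∅ := by simp [FArc]
          have e1 : FArc v 1 = {E v} := by simp [FArc]
          have h1 : s(u, w) = E v := by
            rw [show E v = s(v, v + 1) from rfl, hvw, ← hu1, Sym2.eq_swap]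
          rw [hE, e0, e1, h1]
          simp
        | k + 1 =>
          exfalso
          have hmem : E w ∈ q.edges.toFinset := by
            rw [hE, mem_FArc]
            exact ⟨0, by omega, by simp⟩
          rw [List.mem_toFinset] at hmem
          have hwu : E w = s(w, u) := by rw [hu1]; rfl
          rw [hwu] at hmem
          exact hu (q.snd_mem_support_of_mem_edges hmem)
    · -- q descending to v : w = v + n
      rcases adj_cases h with hw | hw
      · -- w = u + 1 : turn back
        match n with
        | 0 =>
          left
          have hvw : v = w := by simpa using hv.symm
          refine ⟨by push_cast; linear_combination hvw + hw, ?_⟩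
          have e0 : FArc v 0 = ∅ := by simp [FArc]
          have e1 : FArc u 1 = {E u} := by simp [FArc]
          have h1 : s(u, w) = E u := by rw [hw]; rfl
          rw [hE, e0, e1, h1]
          simp
        | k + 1 =>
          exfalso
          push_cast at hv
          have hvk : v + (k : Fin 10) = u := by linear_combination hw - hv
          have hmem : E (v + (k : Fin 10)) ∈ q.edges.toFinset := by
            rw [hE, mem_FArc]
            exact ⟨k, by omega, rfl⟩
          rw [List.mem_toFinset] at hmem
          have h2 : E (v + (k : Fin 10)) = s(u, w) := by
            rw [show E (v + (k : Fin 10)) = s(v + (k : Fin 10), v + (k : Fin 10) + 1) from rfl,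
              hvk, ← hw]
          rw [h2] at hmem
          exact hu (q.fst_mem_support_of_mem_edges hmem)
      · -- w = u - 1 : descending continues
        right
        have hu1 : u = w + 1 := by linear_combination -hw
        refine ⟨by push_cast; linear_combination hu1 + hv, ?_⟩
        have h1 : s(u, w) = E (v + (n : Fin 10)) := by
          rw [show E (v + (n : Fin 10)) = s(v + (n : Fin 10), v + (n : Fin 10) + 1) from rfl,
            ← hv, ← hu1, Sym2.eq_swap]
        rw [hE, FArc_snoc, h1]
lemma adj_succ (u : Fin 10) : (SimpleGraph.cycleGraph 10).Adj u (u + 1) := by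
  rw [cycleGraph_adj (n := 8)]
  right
  ring

/-- ascending walk of length k from u -/
def awalk : (k : ℕ) → (u : Fin 10) → (SimpleGraph.cycleGraph 10).Walk u (u + (k : Fin 10))
  | 0, u => SimpleGraph.Walk.nil.copy rfl (by simp)
  | k + 1, u => ((awalk k (u + 1)).cons (adj_succ u)).copy rfl (by push_cast; ring)

@[simp] lemma awalk_length (k : ℕ) (u : Fin 10) : (awalk k u).length = k := by
  induction k generalizing u with
  | zero => simp [awalk]
  | succ k ih => simp [awalk, ih]

lemma awalk_support (k : ℕ) (u : Fin 10) :
    (awalk k u).support = (List.range (k + 1)).map (fun t : ℕ => u + (t : Fin 10)) := by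
  induction k generalizing u with
  | zero => simp [awalk, List.range_succ]
  | succ k ih =>
    rw [awalk, SimpleGraph.Walk.support_copy, SimpleGraph.Walk.support_cons, ih]
    simp only [List.range_succ_eq_map, List.map_cons, List.map_map, Nat.cast_zero, add_zero]
    congr 2
    apply List.map_congr_left
    intro t _
    simp only [Function.comp_apply]
    push_cast
    ring

lemma awalk_edges (k : ℕ) (u : Fin 10) : (awalk k u).edges.toFinset = FArc u k := by
  induction k generalizing u with
  | zero => simp [awalk, FArc]
  | succ k ih =>
    rw [awalk, SimpleGraph.Walk.edges_copy, SimpleGraph.Walk.edges_cons, List.toFinset_cons,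
      ih, FArc_cons]
    rfl

lemma awalk_isPath {k : ℕ} (hk : k ≤ 9) (u : Fin 10) : (awalk k u).IsPath := by
  rw [SimpleGraph.Walk.isPath_def, awalk_support]
  apply List.Nodup.map_on
  · intro t ht t' ht' hh
    rw [List.mem_range] at ht ht'
    exact cast_inj_ten (by omega) (by omega) (add_left_cancel hh)
  · exact List.nodup_range
lemma cycle_dist (u v : Fin 10) :
    (SimpleGraph.cycleGraph 10).dist u v = min (v - u).val (10 - (v - u).val) := by
  set d := (v - u).val with hdd
  have hd10 : d < 10 := (v - u).isLt
  have hcast : ((d : ℕ) : Fin 10) = v - u := Fin.cast_val_eq_self _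
  have h2 : ((10 - d : ℕ) : Fin 10) = u - v := by
    have h3 : ((10 - d : ℕ) : Fin 10) + ((d : ℕ) : Fin 10) = 0 := by
      rw [← Nat.cast_add, show 10 - d + d = 10 by omega]
      simp
    rw [hcast] at h3
    linear_combination h3
  have up1 : (SimpleGraph.cycleGraph 10).dist u v ≤ d := by
    have h1 : u + ((d : ℕ) : Fin 10) = v := by rw [hcast]; ring
    have := SimpleGraph.dist_le ((awalk d u).copy rfl h1)
    simpa using this
  have up2 : (SimpleGraph.cycleGraph 10).dist u v ≤ 10 - d := by
    have h1 : v + ((10 - d : ℕ) : Fin 10) = u := by rw [h2]; ring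
    rw [SimpleGraph.dist_comm]
    have := SimpleGraph.dist_le ((awalk (10 - d) v).copy rfl h1)
    simpa using this
  have low : min d (10 - d) ≤ (SimpleGraph.cycleGraph 10).dist u v := by
    obtain ⟨p, hp, hl⟩ := (cycleGraph_connected (n := 9)).exists_path_of_dist u v
    have hL9 : p.length ≤ 9 := by
      have := hp.length_lt
      simpa using Nat.lt_succ_iff.mp (by simpa using this)
    rcases path_arc p hp with ⟨h1, _⟩ | ⟨h1, _⟩
    · have hc : ((p.length + (10 - d) : ℕ) : Fin 10) = 0 := by
        push_cast
        rw [h2]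
        linear_combination -h1
      rw [Fin.natCast_eq_zero] at hc
      rw [← hl]
      omega
    · have hc : ((p.length + d : ℕ) : Fin 10) = 0 := by
        push_cast
        rw [hcast]
        linear_combination -h1
      rw [Fin.natCast_eq_zero] at hc
      rw [← hl]
      omega
  omega
lemma FArc_injOn_aux {i i' : Fin 10} {k k' : ℕ} (hk : k ≤ 4) (hk' : k' ≤ 4)
    (h : FArc i (k + 1) = FArc i' (k' + 1)) : i = i' ∧ k = k' := by
  have hcard : k = k' := by
    have := congrArg Finset.card h
    rw [FArc_card (by omega), FArc_card (by omega)] at this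
    omega
  subst hcard
  refine ⟨?_, rfl⟩
  have m1 : E i ∈ FArc i' (k + 1) := by
    rw [← h, mem_FArc]; exact ⟨0, by omega, by simp⟩
  have m2 : E i' ∈ FArc i (k + 1) := by
    rw [h, mem_FArc]; exact ⟨0, by omega, by simp⟩
  rw [mem_FArc] at m1 m2
  obtain ⟨t, ht, hti⟩ := m1
  obtain ⟨s, hs, hsi⟩ := m2
  have hti' := E_inj hti
  have hsi' := E_inj hsi
  have hst : ((s + t : ℕ) : Fin 10) = 0 := by
    push_cast
    linear_combination -hti' - hsi'
  rw [Fin.natCast_eq_zero] at hst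
  have : s = 0 ∧ t = 0 := by omega
  rw [hti', this.2]
  simp

def g50 (ik : Fin 10 × Fin 5) : Finset (Sym2 (Fin 10)) := FArc ik.1 (ik.2.val + 1)

lemma g50_inj : Function.Injective g50 := by
  rintro ⟨i, k⟩ ⟨i', k'⟩ h
  obtain ⟨h1, h2⟩ := FArc_injOn_aux (by omega) (by omega) h
  simp only [Prod.mk.injEq]
  exact ⟨h1, Fin.ext h2⟩

def G50 : Finset (Finset (Sym2 (Fin 10))) := Finset.univ.image g50

lemma G50_card : G50.card = 50 := by
  rw [G50, Finset.card_image_of_injective _ g50_inj]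
  simp

lemma gps_eq : (SimpleGraph.cycleGraph 10).geodesicPathSets = ↑G50 := by
  ext S
  constructor
  · rintro ⟨u, v, p, ⟨hpath, hdist, hpos⟩, rfl⟩
    have hd5 : p.length ≤ 5 := by
      rw [hdist, cycle_dist]
      have := (v - u).isLt
      omega
    rcases path_arc p hpath with ⟨_, hE⟩ | ⟨_, hE⟩
    · rw [Finset.mem_coe, G50, Finset.mem_image]
      refine ⟨(u, ⟨p.length - 1, by omega⟩), Finset.mem_univ _, ?_⟩
      rw [g50]
      simp only
      rw [show p.length - 1 + 1 = p.length by omega]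
      exact hE.symm
    · rw [Finset.mem_coe, G50, Finset.mem_image]
      refine ⟨(v, ⟨p.length - 1, by omega⟩), Finset.mem_univ _, ?_⟩
      rw [g50]
      simp only
      rw [show p.length - 1 + 1 = p.length by omega]
      exact hE.symm
  · rw [Finset.mem_coe, G50, Finset.mem_image]
    rintro ⟨⟨i, k⟩, -, rfl⟩
    refine ⟨i, i + ((k.val + 1 : ℕ) : Fin 10), awalk (k.val + 1) i, ⟨?_, ?_, ?_⟩, ?_⟩
    · exact awalk_isPath (by omega) i
    · rw [awalk_length, cycle_dist]
      have : (i + ((k.val + 1 : ℕ) : Fin 10) - i) = ((k.val + 1 : ℕ) : Fin 10) := by ring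
      rw [this, Fin.val_natCast]
      have := k.isLt
      omega
    · simp
    · rw [awalk_edges, g50]
lemma sum_FArc (f : Sym2 (Fin 10) → ℕ) (i : Fin 10) {k : ℕ} (hk : k ≤ 10) :
    ∑ e ∈ FArc i k, f e = ∑ t ∈ Finset.range k, f (E (i + (t : Fin 10))) := by
  rw [FArc, Finset.sum_image]
  intro t ht t' ht' h
  simp only [Finset.coe_range, Set.mem_Iio] at ht ht'
  exact cast_inj_ten (by omega) (by omega) (add_left_cancel (E_inj h))

lemma shift_sum (f : Sym2 (Fin 10) → ℕ) (t : Fin 10) :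
    ∑ i : Fin 10, f (E (i + t)) = ∑ j : Fin 10, f (E j) :=
  Fintype.sum_equiv (Equiv.addRight t) _ _ (fun _ => rfl)

lemma shift_sum' (f : Sym2 (Fin 10) → ℕ) (a : Fin 10) :
    ∑ j : Fin 10, f (E (a + j)) = ∑ j : Fin 10, f (E j) :=
  Fintype.sum_equiv (Equiv.addLeft a) _ _ (fun _ => rfl)

lemma total_sum (f : Sym2 (Fin 10) → ℕ) :
    ∑ S ∈ G50, ∑ e ∈ S, f e = 15 * ∑ j : Fin 10, f (E j) := by
  have h1 : ∀ k : ℕ, k ≤ 10 →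
      ∑ i : Fin 10, ∑ t ∈ Finset.range k, f (E (i + (t : Fin 10)))
        = k * ∑ j : Fin 10, f (E j) := by
    intro k hk
    rw [Finset.sum_comm, Finset.sum_congr rfl (fun t _ => shift_sum f _),
      Finset.sum_const, Finset.card_range, smul_eq_mul]
  rw [G50, Finset.sum_image (fun x _ y _ h => g50_inj h)]
  have h2 : ∀ ik : Fin 10 × Fin 5, ∑ e ∈ g50 ik, f e
      = ∑ t ∈ Finset.range (ik.2.val + 1), f (E (ik.1 + (t : Fin 10))) := by
    intro ik
    rw [g50, sum_FArc f _ (by omega)]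
  rw [Finset.sum_congr rfl (fun ik _ => h2 ik), Fintype.sum_prod_type, Finset.sum_comm]
  have h3 : ∀ k : Fin 5,
      ∑ i : Fin 10, ∑ t ∈ Finset.range (k.val + 1), f (E (i + (t : Fin 10)))
        = (k.val + 1) * ∑ j : Fin 10, f (E j) := fun k => h1 _ (by omega)
  rw [Finset.sum_congr rfl (fun k _ => h3 k), ← Finset.sum_mul]
  have h15 : ∑ k : Fin 5, (k.val + 1) = 15 := rfl
  rw [h15]

lemma comp_sum (f : Sym2 (Fin 10) → ℕ) (a : Fin 10) :
    (∑ e ∈ FArc a 5, f e) + (∑ e ∈ FArc (a + 5) 5, f e) = ∑ j : Fin 10, f (E j) := by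
  rw [sum_FArc f a (by norm_num), sum_FArc f (a + 5) (by norm_num)]
  have h2 : ∑ t ∈ Finset.range 5, f (E (a + 5 + (t : Fin 10)))
      = ∑ t ∈ (Finset.Ico 5 10 : Finset ℕ), f (E (a + (t : Fin 10))) := by
    rw [Finset.sum_Ico_eq_sum_range]
    norm_num
    apply Finset.sum_congr rfl
    intro t _
    congr 2
    ring
  rw [h2, Finset.range_eq_Ico, Finset.sum_Ico_consecutive _ (by norm_num) (by norm_num),
    ← Finset.range_eq_Ico, ← Fin.sum_univ_eq_sum_range (fun t => f (E (a + (t : Fin 10)))) 10]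
  simp only [Fin.cast_val_eq_self]
  exact shift_sum' f a

lemma arc5_ge (f : Sym2 (Fin 10) → ℕ)
    (hf : (SimpleGraph.cycleGraph 10).IsGeodesicLeechLabeling f) (a : Fin 10) :
    35 ≤ ∑ e ∈ FArc a 5, f e := by
  obtain ⟨hpos, hbij⟩ := hf
  have htgp : (SimpleGraph.cycleGraph 10).tgp = 50 := by
    rw [SimpleGraph.tgp, gps_eq, Set.ncard_coe_finset, G50_card]
  rw [gps_eq, htgp] at hbij
  have hsum : ∑ S ∈ G50, ∑ e ∈ S, f e = ∑ m ∈ Finset.Icc 1 50, m := by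
    apply Finset.sum_nbij (i := fun S => ∑ e ∈ S, f e)
    · intro S hS
      have := hbij.mapsTo (by exact hS)
      rw [Set.mem_Icc] at this
      rw [Finset.mem_Icc]
      exact this
    · exact fun S hS T hT h => hbij.injOn hS hT h
    · intro m hm
      apply hbij.surjOn
      simpa using hm
    · exact fun _ _ => rfl
  have hIcc : (∑ m ∈ Finset.Icc 1 50, m) = 1275 := by
    have h51 : Finset.Icc 1 50 = Finset.Ico 1 51 := by ext x; simp only [Finset.mem_Icc, Finset.mem_Ico]; omega
    rw [h51, Finset.sum_Ico_eq_sum_range]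
    norm_num [Finset.sum_add_distrib, Finset.sum_range_id]
  have hL : ∑ j : Fin 10, f (E j) = 85 := by
    have := total_sum f
    omega
  have hmem : FArc (a + 5) 5 ∈ (G50 : Set (Finset (Sym2 (Fin 10)))) := by
    rw [Finset.mem_coe, G50, Finset.mem_image]
    exact ⟨(a + 5, ⟨4, by norm_num⟩), Finset.mem_univ _, rfl⟩
  have hle : ∑ e ∈ FArc (a + 5) 5, f e ≤ 50 := by
    have := hbij.mapsTo hmem
    rw [Set.mem_Icc] at this
    exact this.2
  have := comp_sum f a
  omega
/-- If `f` is a geodesic Leech labeling of the cycle on `10` vertices, then every geodesic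
path of length `5` has weight at least `35` under `f`. -/
theorem statement_8 (f : Sym2 (Fin 10) → ℕ)
    (hf : (SimpleGraph.cycleGraph 10).IsGeodesicLeechLabeling f)
    {u v : Fin 10} (p : (SimpleGraph.cycleGraph 10).Walk u v)
    (hp : (SimpleGraph.cycleGraph 10).IsGeodesicWalk p) (hlen : p.length = 5) :
    35 ≤ ∑ e ∈ p.edges.toFinset, f e := by
  rcases path_arc p hp.1 with ⟨_, hE⟩ | ⟨_, hE⟩ <;> rw [hlen] at hE <;> rw [hE]
  · exact arc5_ge f hf u
  · exact arc5_ge f hf v
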